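/- arXiv:2509.18057 — 2 statements merged into one kernel-verified Lean document; each statement's English description precedes it below -/
import Mathlib

section
/- Let G be a d-regular graph on n vertices whose adjacency matrix A satisfies λ*(G) ≤ λ, and let S be an independent set in G with |S| = αn. Then α ≤ λ/(d+λ) (Hoffman's bound). -/
open Module LinearMap RealInnerProductSpace Finset

private lemma quad_lower {F : Type*} [NormedAddCommGroup F] [InnerProductSpace ℝ F]
    [FiniteDimensional ℝ F]
    {T : F →ₗ[ℝ] F} (hT : T.IsSymmetric) {m : ℕ} (hm : Module.finrank ℝ F = m)
    {c : ℝ} (hc : ∀ i, -c ≤ hT.eigenvalues hm i) (w : F) :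
    -c * ‖w‖^2 ≤ ⟪w, T w⟫ := by
  set b := hT.eigenvectorBasis hm with hb
  have h1 : ⟪w, T w⟫ = ∑ i, hT.eigenvalues hm i * (b.repr w i)^2 := by
    rw [← b.repr.inner_map_map w (T w), PiLp.inner_apply]
    refine Finset.sum_congr rfl fun i _ => ?_
    rw [hT.eigenvectorBasis_apply_self_apply hm w i]
    simp [RCLike.inner_apply]; ring
  have h2 : ‖w‖^2 = ∑ i, (b.repr w i)^2 := by
    rw [← real_inner_self_eq_norm_sq, ← b.repr.inner_map_map w w, PiLp.inner_apply]
    simp [RCLike.inner_apply, sq]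
  rw [h1, h2, Finset.mul_sum]
  refine Finset.sum_le_sum fun i _ => ?_
  nlinarith [hc i, sq_nonneg (b.repr w i)]

set_option maxHeartbeats 1000000 in
/-- Hoffman's bound: if `G` is a `d`-regular graph on `n` vertices whose
nontrivial eigenvalues are bounded in absolute value by `lam`, and `S` is an
independent set with `|S| = α·n`, then `α ≤ lam/(d+lam)`. -/
theorem stmt3 (n d : ℕ) (hn : 2 ≤ n) (hd : 1 ≤ d)
    (A : Matrix (Fin n) (Fin n) ℝ)
    (hsymm : A.IsSymm)
    (h01 : ∀ i j, A i j = 0 ∨ A i j = 1)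
    (hdiag : ∀ i, A i i = 0)
    (hreg : A.mulVec (fun _ => 1) = fun _ => (d : ℝ))
    (lam : ℝ)
    (hspec : ∀ (μ : ℝ) (v : Fin n → ℝ), v ≠ 0 →
      dotProduct v (fun _ => (1 : ℝ)) = 0 →
      A.mulVec v = μ • v → |μ| ≤ lam)
    (S : Finset (Fin n))
    (hind : ∀ i ∈ S, ∀ j ∈ S, A i j = 0)
    (α : ℝ) (hα : (S.card : ℝ) = α * n) :
    α ≤ lam / (d + lam) := by
  classical
  have hn0 : (0:ℝ) < n := by exact_mod_cast Nat.lt_of_lt_of_le Nat.zero_lt_two hn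
  set e := WithLp.equiv 2 (Fin n → ℝ) with he
  set u : EuclideanSpace ℝ (Fin n) := e.symm (fun _ => 1) with hu
  set T := Matrix.toEuclideanLin A with hTdef
  have hherm : A.IsHermitian := by
    rwa [Matrix.IsHermitian, Matrix.conjTranspose_eq_transpose_of_trivial]
  have hT : T.IsSymmetric := Matrix.isHermitian_iff_isSymmetric.mp hherm
  have hinner : ∀ x y : Fin n → ℝ, ⟪e.symm x, e.symm y⟫ = ∑ i, x i * y i := by
    intro x y; rw [PiLp.inner_apply]; simp [he, RCLike.inner_apply, PiLp.toLp_apply, mul_comm]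
  have hTapp : ∀ x : Fin n → ℝ, T (e.symm x) = e.symm (A.mulVec x) := fun x =>
    Matrix.toEuclideanLin_apply_piLp_toLp A x
  have hTu : T u = (d:ℝ) • u := by
    rw [hu, hTapp, hreg]; ext i; simp [he, PiLp.toLp_apply]
  set W := (ℝ ∙ u)ᗮ with hW
  have hmemW : ∀ v : EuclideanSpace ℝ (Fin n), v ∈ W ↔ ⟪u, v⟫ = 0 := fun v =>
    Submodule.mem_orthogonal_singleton_iff_inner_right
  have hinv : ∀ v ∈ W, T v ∈ W := by
    intro v hv
    rw [hmemW] at hv ⊢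
    rw [← hT u v, hTu, inner_smul_left]
    simp [hv]
  set T' := T.restrict hinv with hT'def
  have hT' : T'.IsSymmetric := hT.restrict_invariant hinv
  set m := finrank ℝ W with hm
  have hmrank : finrank ℝ W = m := rfl
  -- eigenvalue bounds
  have hμbound : ∀ i, |hT'.eigenvalues hmrank i| ≤ lam := by
    intro i
    set bi := hT'.eigenvectorBasis hmrank i with hbi
    have hei : T' bi = hT'.eigenvalues hmrank i • bi := hT'.apply_eigenvectorBasis hmrank i
    set v : Fin n → ℝ := e ((bi : EuclideanSpace ℝ (Fin n))) with hv
    have hv0 : v ≠ 0 := by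
      intro h
      have h1 : (bi : EuclideanSpace ℝ (Fin n)) = 0 := by
        have := (e.symm_apply_apply (bi : EuclideanSpace ℝ (Fin n))).symm
        rw [← hv, h] at this
        exact this
      have h2 : bi = 0 := Subtype.coe_injective h1
      exact (hT'.eigenvectorBasis hmrank).orthonormal.ne_zero i h2
    have hdot : dotProduct v (fun _ => (1:ℝ)) = 0 := by
      have hw : ⟪u, (bi : EuclideanSpace ℝ (Fin n))⟫ = 0 := (hmemW _).mp bi.2
      have : (bi : EuclideanSpace ℝ (Fin n)) = e.symm v := by simp [hv]
      rw [this, hu, hinner] at hw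
      simpa [dotProduct] using hw
    have hmul : A.mulVec v = hT'.eigenvalues hmrank i • v := by
      have hco : T (bi : EuclideanSpace ℝ (Fin n))
          = hT'.eigenvalues hmrank i • (bi : EuclideanSpace ℝ (Fin n)) := by
        rw [← LinearMap.restrict_coe_apply T hinv, hei]; rfl
      have : (bi : EuclideanSpace ℝ (Fin n)) = e.symm v := by simp [hv]
      rw [this, hTapp] at hco
      have := congrArg e hco
      exact this
    exact hspec _ v hv0 hdot hmul
  -- lam nonneg
  have hu0 : u ≠ 0 := by
    intro h
    have := congrFun (congrArg e h) ⟨0, by omega⟩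
    rw [hu, e.apply_symm_apply, WithLp.equiv_apply, WithLp.ofLp_zero] at this
    simp at this
  have hmpos : 0 < m := by
    have h1 : finrank ℝ (ℝ ∙ u) = 1 := finrank_span_singleton hu0
    have h2 := Submodule.finrank_add_finrank_orthogonal (K := ℝ ∙ u)
    rw [finrank_euclideanSpace_fin, h1] at h2
    show 0 < finrank ℝ W
    rw [hW]
    omega
  have hlam0 : 0 ≤ lam := le_trans (abs_nonneg _) (hμbound ⟨0, hmpos⟩)
  -- the test vector
  set s : Fin n → ℝ := fun i => if i ∈ S then 1 else 0 with hs
  set x0 : Fin n → ℝ := fun i => s i - α with hx0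
  set x : EuclideanSpace ℝ (Fin n) := e.symm x0 with hx
  have hsums : ∑ i, s i = α * n := by
    rw [← hα]; simp [hs]
  have hxW : x ∈ W := by
    rw [hmemW, hx, hu, hinner]
    simp only [one_mul, hx0]
    rw [Finset.sum_sub_distrib, hsums]
    simp [Finset.card_univ]
    ring
  -- quadratic form bound
  have hquad : -lam * ‖x‖^2 ≤ ⟪x, T x⟫ := by
    have hc : ∀ i, -lam ≤ hT'.eigenvalues hmrank i := fun i => (abs_le.mp (hμbound i)).1
    have h := quad_lower hT' hmrank hc ⟨x, hxW⟩
    have e1 : ((T' ⟨x, hxW⟩ : W) : EuclideanSpace ℝ (Fin n)) = T x :=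
      LinearMap.restrict_coe_apply T hinv ⟨x, hxW⟩
    have e2 : ⟪(⟨x, hxW⟩ : W), T' ⟨x, hxW⟩⟫ = ⟪x, T x⟫ := by
      rw [Submodule.coe_inner, e1]
    have e3 : ‖(⟨x, hxW⟩ : W)‖ = ‖x‖ := rfl
    rw [e2, e3] at h
    exact h
  -- compute the quadratic form
  have rowsum : ∀ i, ∑ j, A i j = (d:ℝ) := by
    intro i
    have h := congrFun hreg i
    simpa [Matrix.mulVec, dotProduct] using h
  have colsum : ∀ j, ∑ i, A i j = (d:ℝ) := by
    intro j
    rw [← rowsum j]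
    exact Finset.sum_congr rfl fun i _ => hsymm.apply j i
  set r : Fin n → ℝ := fun i => ∑ j, A i j * s j with hr
  have hr0 : ∑ i, s i * r i = 0 := by
    rw [Finset.sum_eq_zero]
    intro i _
    simp only [hr, Finset.mul_sum]
    rw [Finset.sum_eq_zero]
    intro j _
    by_cases hi : i ∈ S
    · by_cases hj : j ∈ S
      · rw [hind i hi j hj]; ring
      · simp [hs, hj]
    · simp [hs, hi]
  have hrsum : ∑ i, r i = d * (α * n) := by
    simp only [hr]
    rw [Finset.sum_comm]
    have : ∀ j, ∑ i, A i j * s j = (d:ℝ) * s j := by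
      intro j; rw [← Finset.sum_mul, colsum]
    rw [Finset.sum_congr rfl fun j _ => this j, ← Finset.mul_sum, hsums]
  have hQ : ⟪x, T x⟫ = ∑ i, ∑ j, x0 i * (A i j * x0 j) := by
    rw [hx, hTapp, hinner]
    refine Finset.sum_congr rfl fun i _ => ?_
    simp [Matrix.mulVec, dotProduct, Finset.mul_sum]
  have hQval : ∑ i, ∑ j, x0 i * (A i j * x0 j) = -(α^2 * d * n) := by
    have step : ∀ i, ∑ j, x0 i * (A i j * x0 j)
        = s i * r i - (α*(d:ℝ)) * s i - α * r i + α^2 * d := by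
      intro i
      have h1 : ∑ j, x0 i * (A i j * x0 j) = x0 i * (r i - α * d) := by
        rw [← Finset.mul_sum]
        congr 1
        have h2 : ∀ j, A i j * x0 j = A i j * s j - α * A i j := by
          intro j; simp only [hx0]; ring
        rw [Finset.sum_congr rfl fun j _ => h2 j, Finset.sum_sub_distrib,
          ← Finset.mul_sum, rowsum, hr]
      rw [h1]; simp only [hx0]; ring
    rw [Finset.sum_congr rfl fun i _ => step i, Finset.sum_add_distrib,
      Finset.sum_sub_distrib, Finset.sum_sub_distrib, hr0, ← Finset.mul_sum,
      ← Finset.mul_sum, hrsum, hsums]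
    simp [Finset.card_univ]
    ring
  -- compute the norm
  have hN : ‖x‖^2 = α * n - α^2 * n := by
    rw [← real_inner_self_eq_norm_sq, hx, hinner]
    have step : ∀ i, x0 i * x0 i = s i - 2*α*(s i) + α^2 := by
      intro i
      have hsi : s i * s i = s i := by by_cases h : i ∈ S <;> simp [hs, h]
      simp only [hx0]
      nlinarith [hsi]
    rw [Finset.sum_congr rfl fun i _ => step i, Finset.sum_add_distrib,
      Finset.sum_sub_distrib, ← Finset.mul_sum, hsums]
    simp [Finset.card_univ]
    ring
  -- final algebra
  have hmain : α^2 * d * n ≤ lam * (α*n - α^2*n) := by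
    rw [hQ, hQval, hN] at hquad
    linarith
  have hα0 : 0 ≤ α := by
    have h1 : (0:ℝ) ≤ α * n := by rw [← hα]; exact Nat.cast_nonneg _
    have h2 : (0:ℝ) * n ≤ α * n := by simpa using h1
    exact le_of_mul_le_mul_right h2 hn0
  have hd1 : (1:ℝ) ≤ d := by exact_mod_cast hd
  have hdlam : (0:ℝ) < d + lam := by linarith
  rcases eq_or_lt_of_le hα0 with h|h
  · rw [← h]; positivity
  · rw [le_div_iff₀ hdlam]
    have h2 : (α*((d:ℝ)+lam)) * (α*n) ≤ lam * (α*n) := by nlinarith [hmain]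
    exact le_of_mul_le_mul_right h2 (mul_pos h hn0)
end

section
/- Let G be a d-regular graph on n vertices with λ*(G) ≤ λ. Then every cut (S, S̄) of G crosses at most (1/2 + λ/(2d)) fraction of the edges; i.e., MC(G) ≤ 1/2 + λ/(2d). -/
open Matrix Module
open scoped RealInnerProductSpace

/-- Quadratic form lower bound for a symmetric operator whose eigenvalues are ≥ `-lam`. -/
lemma quad_lower_bound {E : Type*} [NormedAddCommGroup E] [InnerProductSpace ℝ E]
    [FiniteDimensional ℝ E] {T : E →ₗ[ℝ] E} (hT : T.IsSymmetric) {lam : ℝ}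
    (hev : ∀ (μ : ℝ) (v : E), v ≠ 0 → T v = μ • v → -lam ≤ μ) (y : E) :
    -lam * ⟪y, y⟫ ≤ ⟪y, T y⟫ := by
  have hm : Module.finrank ℝ E = Module.finrank ℝ E := rfl
  set b := hT.eigenvectorBasis hm with hbdef
  set μ := hT.eigenvalues hm with hμdef
  have hb : ∀ i, T (b i) = μ i • b i := fun i => hT.apply_eigenvectorBasis hm i
  have hμ : ∀ i, -lam ≤ μ i := by
    intro i
    refine hev (μ i) (b i) ?_ (hb i)
    have := b.toBasis.ne_zero i
    simpa using this
  set r : Fin (finrank ℝ E) → ℝ := fun i => b.repr y i with hr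
  have hy : y = ∑ i, r i • b i := (b.sum_repr y).symm
  have hTy : T y = ∑ i, (μ i * r i) • b i := by
    conv_lhs => rw [hy]
    rw [map_sum]
    exact Finset.sum_congr rfl fun i _ => by rw [_root_.map_smul, hb i, smul_smul, mul_comm]
  have h1 : ⟪y, T y⟫ = ∑ i, r i * (μ i * r i) := by
    conv_lhs => rw [hTy, hy]
    simpa using b.orthonormal.inner_sum r (fun i => μ i * r i) Finset.univ
  have h2 : ⟪y, y⟫ = ∑ i, r i * r i := by
    conv_lhs => rw [hy]
    simpa using b.orthonormal.inner_sum r r Finset.univ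
  rw [h1, h2, Finset.mul_sum]
  refine Finset.sum_le_sum fun i _ => ?_
  nlinarith [hμ i, sq_nonneg (r i)]

lemma lam_nn {E : Type*} [NormedAddCommGroup E] [InnerProductSpace ℝ E]
    [FiniteDimensional ℝ E] [Nontrivial E] {T : E →ₗ[ℝ] E} (hT : T.IsSymmetric) {lam : ℝ}
    (hev : ∀ (μ : ℝ) (v : E), v ≠ 0 → T v = μ • v → |μ| ≤ lam) : 0 ≤ lam := by
  have hm : Module.finrank ℝ E = Module.finrank ℝ E := rfl
  have hpos : 0 < finrank ℝ E := finrank_pos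
  set b := hT.eigenvectorBasis hm
  set μ := hT.eigenvalues hm
  have i : Fin (finrank ℝ E) := ⟨0, hpos⟩
  have h := hev (μ i) (b i) (by simpa using b.toBasis.ne_zero i) (hT.apply_eigenvectorBasis hm i)
  exact le_trans (abs_nonneg _) h




/-- Spectral bound on Max-Cut: if `G` is a `d`-regular graph on `n` vertices
whose nontrivial eigenvalues are bounded in absolute value by `lam`, then every
cut `(S, S̄)` crosses at most a `1/2 + lam/(2d)` fraction of the edges.  Here
`∑ i ∑ j A i j · 1{i∈S xor j∈S} = 2|δ(S,S̄)|` and `n·d = 2|E(G)|`, so the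
left-hand side is the cut fraction. -/
theorem stmt4 (n d : ℕ) (hn : 2 ≤ n) (hd : 1 ≤ d)
    (A : Matrix (Fin n) (Fin n) ℝ)
    (hsymm : A.IsSymm)
    (h01 : ∀ i j, A i j = 0 ∨ A i j = 1)
    (hdiag : ∀ i, A i i = 0)
    (hreg : A.mulVec (fun _ => 1) = fun _ => (d : ℝ))
    (lam : ℝ)
    (hspec : ∀ (μ : ℝ) (v : Fin n → ℝ), v ≠ 0 →
      dotProduct v (fun _ => (1 : ℝ)) = 0 →
      A.mulVec v = μ • v → |μ| ≤ lam) :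
    ∀ S : Finset (Fin n),
      (∑ i, ∑ j, A i j * (if (i ∈ S) ↔ (j ∈ S) then 0 else 1)) / (n * d)
        ≤ 1 / 2 + lam / (2 * d) := by
  classical
  intro S
  have hd0 : (0:ℝ) < d := by exact_mod_cast hd
  have hn0 : (0:ℝ) < n := by positivity
  -- Euclidean space setup
  set u : EuclideanSpace ℝ (Fin n) := (WithLp.equiv 2 (Fin n → ℝ)).symm (fun _ => 1) with hu
  have hu_apply : ∀ i, u i = 1 := fun i => rfl
  have hu_ne : u ≠ 0 := by
    intro h
    have h0 : u ⟨0, by omega⟩ = 0 := by rw [h]; rfl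
    rw [hu_apply ⟨0, by omega⟩] at h0; norm_num at h0
  set T : EuclideanSpace ℝ (Fin n) →ₗ[ℝ] EuclideanSpace ℝ (Fin n) := Matrix.toEuclideanLin A with hT
  have hT_apply : ∀ (v : EuclideanSpace ℝ (Fin n)) (i : Fin n),
      T v i = (A.mulVec (fun j => v j)) i := by
    intro v i
    rfl
  have hTsym : T.IsSymmetric := by
    rw [hT]
    refine Matrix.isHermitian_iff_isSymmetric.mp ?_
    rw [Matrix.IsHermitian]
    ext i j
    simp [Matrix.conjTranspose_apply, ← Matrix.IsSymm.apply hsymm i j]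
  have hinner : ∀ (x y : EuclideanSpace ℝ (Fin n)),
      ⟪x, y⟫ = ∑ i, x i * y i := by
    intro x y
    simp [PiLp.inner_apply, mul_comm]
  have hTu : T u = (d : ℝ) • u := by
    ext i
    have h1 : T u i = (A.mulVec (fun _ => 1)) i := by
      rw [hT_apply]
      congr 1
    rw [h1, hreg]
    show (d : ℝ) = (d : ℝ) * u i
    rw [hu_apply]; ring
  set V : Submodule ℝ (EuclideanSpace ℝ (Fin n)) := (ℝ ∙ u)ᗮ with hV
  have hinv : ∀ v ∈ V, T v ∈ V := by
    intro v hv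
    rw [hV, Submodule.mem_orthogonal_singleton_iff_inner_right]
    rw [← hTsym u v, hTu, inner_smul_left]
    rw [hV, Submodule.mem_orthogonal_singleton_iff_inner_right] at hv
    simp [hv]
  set T' : V →ₗ[ℝ] V := T.restrict hinv with hT'
  have hT'sym : T'.IsSymmetric := hTsym.restrict_invariant hinv
  have hV_nontrivial : Nontrivial V := by
    have h1 : finrank ℝ (ℝ ∙ u) = 1 := finrank_span_singleton hu_ne
    have h2 := Submodule.finrank_add_finrank_orthogonal (K := ℝ ∙ u)
    rw [h1, finrank_euclideanSpace_fin] at h2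
    have h3 : 0 < finrank ℝ V := by rw [hV]; omega
    exact Module.nontrivial_of_finrank_pos h3
  have hspec' : ∀ (μ : ℝ) (v : V), v ≠ 0 → T' v = μ • v → |μ| ≤ lam := by
    intro μ v hv0 hev
    have hveq : T (v : EuclideanSpace ℝ (Fin n)) = μ • (v : EuclideanSpace ℝ (Fin n)) := by
      rw [← LinearMap.restrict_coe_apply T hinv v, hev]; rfl
    refine hspec μ (fun i => (v : EuclideanSpace ℝ (Fin n)) i) ?_ ?_ ?_
    · intro h
      apply hv0
      refine Subtype.ext (PiLp.ext fun i => ?_)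
      exact congrFun h i
    · have hv : ⟪(v : EuclideanSpace ℝ (Fin n)), u⟫ = 0 :=
        Submodule.mem_orthogonal_singleton_iff_inner_left.mp v.2
      rw [hinner] at hv
      simpa [dotProduct, hu_apply] using hv
    · funext i
      have h := congrArg (fun (w : EuclideanSpace ℝ (Fin n)) => w i) hveq
      simp only [] at h
      rw [hT_apply] at h
      exact h
  have hlam0 : 0 ≤ lam := lam_nn hT'sym hspec'
  -- quadratic form bound
  have hquad : ∀ y : Fin n → ℝ, (∑ i, y i) = 0 →
      -lam * (∑ i, y i * y i) ≤ ∑ i, y i * (A.mulVec y) i := by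
    intro y hy0
    set ye : EuclideanSpace ℝ (Fin n) := (WithLp.equiv 2 (Fin n → ℝ)).symm y with hye
    have hmem : ye ∈ V := by
      rw [hV, Submodule.mem_orthogonal_singleton_iff_inner_right, hinner]
      simpa [hu_apply, hye] using hy0
    have hb := quad_lower_bound hT'sym
      (fun μ v hv0 hev => neg_le_of_abs_le (hspec' μ v hv0 hev)) ⟨ye, hmem⟩
    rw [Submodule.coe_inner, Submodule.coe_inner] at hb
    rw [LinearMap.restrict_coe_apply] at hb
    rw [hinner, hinner] at hb
    exact hb
  -- the cut vector
  set x : Fin n → ℝ := fun i => if i ∈ S then 1 else -1 with hx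
  have hx2 : ∀ i, x i * x i = 1 := by
    intro i; rw [hx]; by_cases h : i ∈ S <;> simp [h]
  set c : ℝ := (∑ i, x i) / n with hc
  have hxsum : ∑ i, x i = c * n := by rw [hc]; field_simp
  set y : Fin n → ℝ := fun i => x i - c with hy
  have hysum : ∑ i, y i = 0 := by
    simp only [hy, Finset.sum_sub_distrib, Finset.sum_const, Finset.card_univ,
      Fintype.card_fin, nsmul_eq_mul, hxsum]
    ring
  have hAv1 : ∀ i, (A.mulVec (fun _ => (1:ℝ))) i = d := fun i => congrFun hreg i
  have hcol : ∀ j, ∑ i, A i j = d := by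
    intro j
    have h1 : ∑ i, A j i = d := by
      have := hAv1 j
      simpa [Matrix.mulVec, dotProduct] using this
    rw [← h1]
    exact Finset.sum_congr rfl fun i _ => Matrix.IsSymm.apply hsymm j i
  have hsum_Avy : ∑ i, (A.mulVec y) i = 0 := by
    calc ∑ i, (A.mulVec y) i = ∑ i, ∑ j, A i j * y j := rfl
      _ = ∑ j, ∑ i, A i j * y j := Finset.sum_comm
      _ = ∑ j, (∑ i, A i j) * y j :=
          Finset.sum_congr rfl fun j _ => (Finset.sum_mul _ _ _).symm
      _ = ∑ j, (d:ℝ) * y j := Finset.sum_congr rfl fun j _ => by rw [hcol j]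
      _ = (d:ℝ) * ∑ j, y j := (Finset.mul_sum _ _ _).symm
      _ = 0 := by rw [hysum]; ring
  have hxy : x = fun i => y i + c := by funext i; simp [hy]
  have hAvx : A.mulVec x = fun i => (A.mulVec y) i + c * d := by
    have hsplit : x = y + c • (fun _ => (1:ℝ)) := by
      funext i; simp [hy, mul_comm]
    rw [hsplit, Matrix.mulVec_add, Matrix.mulVec_smul, hreg]
    funext i; simp [mul_comm]
  have hQsplit : ∑ i, x i * (A.mulVec x) i
      = (∑ i, y i * (A.mulVec y) i) + c * d * (∑ i, y i) + c * (∑ i, (A.mulVec y) i)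
        + c * (c * d) * n := by
    calc ∑ i, x i * (A.mulVec x) i
        = ∑ i, (y i * (A.mulVec y) i + c * d * y i + c * (A.mulVec y) i + c * (c * d)) := by
          refine Finset.sum_congr rfl fun i _ => ?_
          rw [congrFun hAvx i, congrFun hxy i]; ring
      _ = _ := by
          rw [Finset.sum_add_distrib, Finset.sum_add_distrib, Finset.sum_add_distrib,
            ← Finset.mul_sum, ← Finset.mul_sum, Finset.sum_const, Finset.card_univ,
            Fintype.card_fin, nsmul_eq_mul]
          ring
  have hysq : ∑ i, y i * y i = (n:ℝ) - c * c * n := by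
    calc ∑ i, y i * y i = ∑ i, (x i * x i - 2 * c * x i + c * c) := by
          refine Finset.sum_congr rfl fun i _ => ?_
          simp only [hy]; ring
      _ = (∑ i, x i * x i) - 2 * c * (∑ i, x i) + (n:ℝ) * (c * c) := by
          rw [Finset.sum_add_distrib, Finset.sum_sub_distrib, ← Finset.mul_sum,
            Finset.sum_const, Finset.card_univ, Fintype.card_fin, nsmul_eq_mul]
      _ = (n:ℝ) - c * c * n := by
          rw [Finset.sum_congr rfl fun i _ => hx2 i, Finset.sum_const, Finset.card_univ,
            Fintype.card_fin, nsmul_eq_mul, hxsum]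
          ring
  have hQ_lb : -lam * n ≤ ∑ i, x i * (A.mulVec x) i := by
    have h1 := hquad y hysum
    rw [hysq] at h1
    rw [hQsplit, hysum, hsum_Avy]
    nlinarith [mul_nonneg hlam0 (mul_nonneg (mul_self_nonneg c) hn0.le),
      mul_nonneg (mul_nonneg (mul_self_nonneg c) hd0.le) hn0.le]
  -- the cut identity
  have hAA : ∑ i, ∑ j, A i j = (n:ℝ) * d := by
    calc ∑ i, ∑ j, A i j = ∑ i, (A.mulVec (fun _ => 1)) i :=
          Finset.sum_congr rfl fun i _ => by simp [Matrix.mulVec, dotProduct]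
      _ = ∑ _i : Fin n, (d:ℝ) := Finset.sum_congr rfl fun i _ => hAv1 i
      _ = (n:ℝ) * d := by
          rw [Finset.sum_const, Finset.card_univ, Fintype.card_fin, nsmul_eq_mul]
  have hxAx : ∑ i, ∑ j, A i j * x i * x j = ∑ i, x i * (A.mulVec x) i := by
    refine Finset.sum_congr rfl fun i _ => ?_
    calc ∑ j, A i j * x i * x j = ∑ j, x i * (A i j * x j) :=
          Finset.sum_congr rfl fun j _ => by ring
      _ = x i * ∑ j, A i j * x j := (Finset.mul_sum _ _ _).symm
      _ = x i * (A.mulVec x) i := rfl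
  have hcut : ∑ i, ∑ j, A i j * (if (i ∈ S) ↔ (j ∈ S) then 0 else 1)
      = ((n:ℝ) * d - ∑ i, x i * (A.mulVec x) i) / 2 := by
    have hterm : ∀ i j, A i j * (if (i ∈ S) ↔ (j ∈ S) then 0 else 1)
        = (A i j - A i j * x i * x j) / 2 := by
      intro i j
      by_cases hi : i ∈ S <;> by_cases hj : j ∈ S <;>
        simp [hx, hi, hj] <;> ring
    calc ∑ i, ∑ j, A i j * (if (i ∈ S) ↔ (j ∈ S) then 0 else 1)
        = ∑ i, ∑ j, (A i j - A i j * x i * x j) / 2 :=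
          Finset.sum_congr rfl fun i _ => Finset.sum_congr rfl fun j _ => hterm i j
      _ = ((∑ i, ∑ j, A i j) - ∑ i, ∑ j, A i j * x i * x j) / 2 := by
          simp only [← Finset.sum_div, ← Finset.sum_sub_distrib]
      _ = ((n:ℝ) * d - ∑ i, x i * (A.mulVec x) i) / 2 := by rw [hAA, hxAx]
  rw [hcut, div_le_iff₀ (by positivity : (0:ℝ) < (n:ℝ) * d)]
  have hexp : (1 / 2 + lam / (2 * (d:ℝ))) * ((n:ℝ) * d) = (n:ℝ) * d / 2 + lam * n / 2 := by
    field_simp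
  rw [hexp]
  linarith [hQ_lb]
end
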